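/- For any two subspaces H₁, H₂ of E, the commutator of the orthogonal projections satisfies [Π(H₁), Π(H₂)] = 𝔇(H₁,H₂)·(Π(H₁) − Π(H₂)), where the product is composition of operators. -/

import Mathlib

variable {E : Type*} [NormedAddCommGroup E] [InnerProductSpace ℂ E] [FiniteDimensional ℂ E]

/-- The orthogonal projection onto a subspace `K`, regarded as an operator on `E`. -/
noncomputable def proj (K : Submodule ℂ E) : E →L[ℂ] E :=
  K.subtypeL.comp K.orthogonalProjection

/-- The Möbius (non-additivity) operator `𝔇(H₁,H₂)`. -/
noncomputable def MobD (H₁ H₂ : Submodule ℂ E) : E →L[ℂ] E :=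
  proj (H₁ ⊔ H₂) + proj (H₁ ⊓ H₂) - proj H₁ - proj H₂


lemma proj_comp_of_le {K L : Submodule ℂ E} (h : K ≤ L) :
    proj K * proj L = proj K := by
  ext v
  show ((K.orthogonalProjection) ((proj L) v) : E) = _
  rw [show proj L v = L.starProjection v from rfl, Submodule.orthogonalProjectionOnto_starProjection_of_le h v]
  rfl

lemma comp_proj_of_le {K L : Submodule ℂ E} (h : K ≤ L) :
    proj L * proj K = proj K := by
  ext v
  show ((L.orthogonalProjection) ((proj K) v) : E) = (proj K) v
  exact Submodule.starProjection_eq_self_iff.2 (h (K.orthogonalProjection v).2)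

theorem commutator_eq_mobD_mul (H₁ H₂ : Submodule ℂ E) :
    proj H₁ * proj H₂ - proj H₂ * proj H₁ = MobD H₁ H₂ * (proj H₁ - proj H₂) := by
  have h1 : proj (H₁ ⊔ H₂) * proj H₁ = proj H₁ := comp_proj_of_le le_sup_left
  have h2 : proj (H₁ ⊔ H₂) * proj H₂ = proj H₂ := comp_proj_of_le le_sup_right
  have h3 : proj (H₁ ⊓ H₂) * proj H₁ = proj (H₁ ⊓ H₂) := proj_comp_of_le inf_le_left
  have h4 : proj (H₁ ⊓ H₂) * proj H₂ = proj (H₁ ⊓ H₂) := proj_comp_of_le inf_le_right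
  have h5 : proj H₁ * proj H₁ = proj H₁ := proj_comp_of_le le_rfl
  have h6 : proj H₂ * proj H₂ = proj H₂ := proj_comp_of_le le_rfl
  simp only [MobD, sub_mul, add_mul, mul_sub, h1, h2, h3, h4, h5, h6]
  abel
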